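/- Let K be a field with a field topology τ (a Hausdorff, non-discrete topology making addition, negation, multiplication, and inversion on K^× continuous). Then τ is t-henselian if and only if τ is gt-henselian and a V-topology. -/

import Mathlib

open Topology

/-- A field topology is gt-henselian if for every `n ≥ 1` and every neighbourhood `P` of
`−1` there is a neighbourhood `O` of `0` such that for all `a₀, …, a_{n−1} ∈ O` the
polynomial `X^{n+1} + X^n + a_{n−1}X^{n−1} + … + a₁X + a₀` has a root in `P`. -/
def GtHenselian (K : Type*) [Field K] [TopologicalSpace K] : Prop :=
  ∀ n : ℕ, 1 ≤ n → ∀ P ∈ nhds (-1 : K), ∃ O ∈ nhds (0 : K),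
    ∀ a : ℕ → K, (∀ i < n, a i ∈ O) →
      ∃ x ∈ P, x ^ (n + 1) + x ^ n + ∑ i ∈ Finset.range n, a i * x ^ i = 0

/-- A field topology is a V-topology if for every neighbourhood `U` of `0` there is a
neighbourhood `W` of `0` such that `xy ∈ W` implies `x ∈ U` or `y ∈ U`. -/
def VTopology (K : Type*) [Field K] [TopologicalSpace K] : Prop :=
  ∀ U ∈ nhds (0 : K), ∃ W ∈ nhds (0 : K), ∀ x y : K, x * y ∈ W → x ∈ U ∨ y ∈ U

/-- A field topology is t-henselian if it is a V-topology and for every `n ≥ 2` there is a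
neighbourhood `U` of `0` such that every polynomial
`X^n + X^{n−1} + a_{n−2}X^{n−2} + … + a₁X + a₀` with `a₀, …, a_{n−2} ∈ U` has a root. -/
def THenselian (K : Type*) [Field K] [TopologicalSpace K] : Prop :=
  VTopology K ∧
    ∀ n : ℕ, 2 ≤ n → ∃ U ∈ nhds (0 : K),
      ∀ a : ℕ → K, (∀ i < n - 1, a i ∈ U) →
        ∃ x : K, x ^ n + x ^ (n - 1) + ∑ i ∈ Finset.range (n - 1), a i * x ^ i = 0

namespace Statement11Aux

open Filter Set Finset

set_option linter.unusedSectionVars false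

section Toolkit
variable {K : Type*} [Field K] [TopologicalSpace K] [IsTopologicalRing K]

/-- continuity of a binary op at a point, in rectangle form -/
private lemma prodNhds {f : K → K → K} {a b c : K}
    (hf : ContinuousAt (fun p : K × K => f p.1 p.2) (a, b)) (hc : f a b = c)
    {U : Set K} (hU : U ∈ 𝓝 c) :
    ∃ A ∈ 𝓝 a, ∃ B ∈ 𝓝 b, ∀ x ∈ A, ∀ y ∈ B, f x y ∈ U := by
  have h : Tendsto (fun p : K × K => f p.1 p.2) (𝓝 a ×ˢ 𝓝 b) (𝓝 c) := by
    rw [← nhds_prod_eq]; exact hc ▸ hf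
  have hmem : (fun p : K × K => f p.1 p.2) ⁻¹' U ∈ 𝓝 a ×ˢ 𝓝 b := h hU
  rw [Filter.mem_prod_iff] at hmem
  obtain ⟨A, hA, B, hB, hsub⟩ := hmem
  exact ⟨A, hA, B, hB, fun x hx y hy => hsub (Set.mk_mem_prod hx hy)⟩

private lemma addSmall (m : ℕ) {U : Set K} (hU : U ∈ 𝓝 (0 : K)) :
    ∃ O ∈ 𝓝 (0 : K), ∀ l ≤ m, ∀ f : ℕ → K, (∀ i < l, f i ∈ O) →
      ∑ i ∈ range l, f i ∈ U := by
  induction m generalizing U with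
  | zero =>
      refine ⟨U, hU, ?_⟩
      intro l hl f _
      interval_cases l
      simpa using mem_of_mem_nhds hU
  | succ m ih =>
      obtain ⟨A, hA, B, hB, hAB⟩ := prodNhds (f := fun x y => x + y)
        (continuous_add.continuousAt) (add_zero 0) hU
      obtain ⟨O, hO, hOsum⟩ := ih hA
      refine ⟨O ∩ B, inter_mem hO hB, ?_⟩
      intro l hl f hf
      match l with
      | 0 => simpa using mem_of_mem_nhds hU
      | Nat.succ l =>
          rw [Finset.sum_range_succ]
          exact hAB _ (hOsum l (by omega) f (fun i hi => (hf i (by omega)).1))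
            _ (hf l (by omega)).2

private lemma powSmall {p : ℕ} (hp : 1 ≤ p) {U : Set K} (hU : U ∈ 𝓝 (0 : K)) :
    ∃ Z ∈ 𝓝 (0 : K), ∀ z ∈ Z, z ^ p ∈ U := by
  have h : Tendsto (fun z : K => z ^ p) (𝓝 0) (𝓝 0) := by
    simpa [zero_pow (by omega : p ≠ 0)] using (continuous_pow p).tendsto (0 : K)
  exact ⟨_, h hU, fun z hz => hz⟩

private lemma powSmallAll (m : ℕ) {U : Set K} (hU : U ∈ 𝓝 (0 : K)) :
    ∃ Z ∈ 𝓝 (0 : K), ∀ z ∈ Z, ∀ p, 1 ≤ p → p ≤ m → z ^ p ∈ U := by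
  induction m with
  | zero => exact ⟨U, hU, fun z _ p h1 h2 => by omega⟩
  | succ m ih =>
      obtain ⟨Z₁, hZ₁, h₁⟩ := ih
      obtain ⟨Z₂, hZ₂, h₂⟩ := powSmall (p := m + 1) (by omega) hU
      refine ⟨Z₁ ∩ Z₂, inter_mem hZ₁ hZ₂, ?_⟩
      intro z hz p h1 h2
      rcases Nat.lt_or_ge p (m + 1) with h | h
      · exact h₁ z hz.1 p h1 (by omega)
      · have : p = m + 1 := by omega
        subst this; exact h₂ z hz.2

/-- `e * z ^ p` is small when `z` is small and either `e` is small, or `e = 1 ∧ p ≥ 1`. -/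
private lemma eMulPowSmall (m : ℕ) {U : Set K} (hU : U ∈ 𝓝 (0 : K)) :
    ∃ O ∈ 𝓝 (0 : K), ∃ Z ∈ 𝓝 (0 : K), ∀ e z : K, ∀ p : ℕ, p ≤ m →
      (e ∈ O ∨ (e = 1 ∧ 1 ≤ p)) → z ∈ Z → e * z ^ p ∈ U := by
  obtain ⟨A, hA, B, hB, hAB⟩ := prodNhds (f := fun x y => x * y)
    (continuous_mul.continuousAt) (mul_zero 0) hU
  obtain ⟨Z, hZ, hZp⟩ := powSmallAll (K := K) m (inter_mem hU hB)
  refine ⟨A ∩ U, inter_mem hA hU, Z, hZ, ?_⟩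
  rintro e z p hpm (he | ⟨rfl, hp⟩) hz
  · rcases Nat.eq_zero_or_pos p with rfl | hp
    · simpa using he.2
    · exact hAB _ he.1 _ (hZp z hz p hp hpm).2
  · simpa using (hZp z hz p hp hpm).1

/-- small elements times powers of elements near 1 are small -/
private lemma mulPowOne (m : ℕ) {U : Set K} (hU : U ∈ 𝓝 (0 : K)) :
    ∃ O ∈ 𝓝 (0 : K), ∃ V ∈ 𝓝 (1 : K), ∀ a t : K, ∀ p : ℕ, p ≤ m →
      a ∈ O → t ∈ V → a * t ^ p ∈ U := by
  induction m with
  | zero =>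
      refine ⟨U, hU, Set.univ, univ_mem, ?_⟩
      intro a t p hp ha _
      interval_cases p
      simpa using ha
  | succ m ih =>
      obtain ⟨O₁, hO₁, V₁, hV₁, h₁⟩ := ih
      obtain ⟨A, hA, B, hB, hAB⟩ := prodNhds (f := fun a t => a * t ^ (m + 1))
        (a := (0 : K)) (b := (1 : K)) (c := (0 : K))
        ((continuous_fst.mul (continuous_snd.pow (m + 1))).continuousAt)
        (by simp) hU
      refine ⟨O₁ ∩ A, inter_mem hO₁ hA, V₁ ∩ B, inter_mem hV₁ hB, ?_⟩
      intro a t p hp ha ht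
      rcases Nat.lt_or_ge p (m + 1) with h | h
      · exact h₁ a t p (by omega) ha.1 ht.1
      · have : p = m + 1 := by omega
        subst this
        exact hAB _ ha.2 _ ht.2

end Toolkit

section VTool
variable {K : Type*} [Field K] [TopologicalSpace K] [IsTopologicalRing K]

private lemma Vasym (hV : VTopology K) {U U' : Set K} (hU : U ∈ 𝓝 (0 : K))
    (hU' : U' ∈ 𝓝 (0 : K)) :
    ∃ W ∈ 𝓝 (0 : K), ∀ x y : K, x * y ∈ W → x ∈ U ∨ y ∈ U' := by
  obtain ⟨W, hW, h⟩ := hV (U ∩ U') (inter_mem hU hU')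
  exact ⟨W, hW, fun x y hxy => (h x y hxy).imp (fun h => h.1) (fun h => h.2)⟩

private lemma VpowSplit (hV : VTopology K) (k : ℕ) {U U' : Set K}
    (hU : U ∈ 𝓝 (0 : K)) (hU' : U' ∈ 𝓝 (0 : K)) :
    ∃ W ∈ 𝓝 (0 : K), ∀ y z : K, y ^ k * z ∈ W → y ∈ U ∨ z ∈ U' := by
  induction k with
  | zero => exact ⟨U', hU', fun y z h => Or.inr (by simpa using h)⟩
  | succ k ih =>
      obtain ⟨W₁, hW₁, h₁⟩ := ih
      obtain ⟨W, hW, h⟩ := Vasym hV hU hW₁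
      refine ⟨W, hW, fun y z hyz => ?_⟩
      have : y * (y ^ k * z) ∈ W := by rw [← mul_assoc, ← pow_succ']; exact hyz
      rcases h _ _ this with hy | hz
      · exact Or.inl hy
      · exact h₁ y z hz

private lemma boundedMul (hV : VTopology K) {Z T : Set K} (hZ : Z ∈ 𝓝 (0 : K))
    (hT : T ∈ 𝓝 (0 : K)) :
    ∃ W ∈ 𝓝 (0 : K), ∀ y w : K, (y = 0 ∨ y⁻¹ ∉ Z) → w ∈ W → y * w ∈ T := by
  obtain ⟨W, hW, h⟩ := Vasym hV hZ hT
  refine ⟨W, hW, ?_⟩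
  rintro y w (rfl | hy) hw
  · simpa using mem_of_mem_nhds hT
  · rcases eq_or_ne y 0 with rfl | hy0
    · simpa using mem_of_mem_nhds hT
    · have : y⁻¹ * (y * w) ∈ W := by rw [inv_mul_cancel_left₀ hy0]; exact hw
      rcases h _ _ this with h1 | h2
      · exact absurd h1 hy
      · exact h2

private lemma mulPowBounded (hV : VTopology K) {Z : Set K} (hZ : Z ∈ 𝓝 (0 : K))
    (m : ℕ) {U : Set K} (hU : U ∈ 𝓝 (0 : K)) :
    ∃ O ∈ 𝓝 (0 : K), ∀ c y : K, ∀ i : ℕ, i ≤ m → c ∈ O → (y = 0 ∨ y⁻¹ ∉ Z) →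
      c * y ^ i ∈ U := by
  induction m generalizing U with
  | zero =>
      refine ⟨U, hU, ?_⟩
      intro c y i hi hc _
      interval_cases i
      simpa using hc
  | succ m ih =>
      obtain ⟨O₁, hO₁, h₁⟩ := ih hU
      obtain ⟨W, hW, hWb⟩ := boundedMul hV hZ hO₁
      refine ⟨O₁ ∩ W, inter_mem hO₁ hW, ?_⟩
      intro c y i hi hc hy
      match i with
      | 0 => simpa using h₁ c y 0 (by omega) hc.1 hy
      | Nat.succ j =>
          have hyc : y * c ∈ O₁ := hWb y c hy hc.2
          have h2 := h₁ (y * c) y j (by omega) hyc hy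
          have : c * y ^ (j + 1) = y * c * y ^ j := by ring
          rw [this]; exact h2

end VTool

section Strip
variable {K : Type*} [Field K]

private lemma stripId (M : ℕ) (e : ℕ → K) (x y : K)
    (hy : ∑ k ∈ range M, e k * y ^ k = 0) :
    ∑ k ∈ range M, e k * x ^ k
      = (x - y) * ∑ j ∈ range M,
          (∑ k ∈ Finset.Ico (j + 1) M, e k * y ^ (k - 1 - j)) * x ^ j := by
  have swap : (∑ j ∈ Finset.Ico 0 M, ∑ k ∈ Finset.Ico (j + 1) M,
        e k * y ^ (k - 1 - j) * x ^ j)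
      = ∑ k ∈ Finset.Ico 0 M, ∑ j ∈ Finset.Ico 0 k, e k * y ^ (k - 1 - j) * x ^ j :=
    Finset.sum_Ico_Ico_comm' 0 M (fun j k => e k * y ^ (k - 1 - j) * x ^ j)
  have hgeom : ∀ k : ℕ, (x - y) * ∑ j ∈ range k, x ^ j * y ^ (k - 1 - j)
      = x ^ k - y ^ k := fun k => (Commute.all x y).mul_geom_sum₂ k
  calc ∑ k ∈ range M, e k * x ^ k
      = ∑ k ∈ range M, e k * x ^ k - ∑ k ∈ range M, e k * y ^ k := by rw [hy, sub_zero]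
    _ = ∑ k ∈ range M, e k * ((x - y) * ∑ j ∈ range k, x ^ j * y ^ (k - 1 - j)) := by
        rw [← Finset.sum_sub_distrib]
        refine Finset.sum_congr rfl fun k _ => ?_
        rw [hgeom k, mul_sub]
    _ = ∑ k ∈ range M, ∑ j ∈ range k, (x - y) * (e k * y ^ (k - 1 - j) * x ^ j) := by
        refine Finset.sum_congr rfl fun k _ => ?_
        rw [Finset.mul_sum, Finset.mul_sum]
        refine Finset.sum_congr rfl fun j _ => ?_
        ring
    _ = (x - y) * ∑ k ∈ range M, ∑ j ∈ range k, e k * y ^ (k - 1 - j) * x ^ j := by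
        rw [Finset.mul_sum]
        refine Finset.sum_congr rfl fun k _ => ?_
        rw [Finset.mul_sum]
    _ = (x - y) * ∑ j ∈ range M, ∑ k ∈ Finset.Ico (j + 1) M,
          e k * y ^ (k - 1 - j) * x ^ j := by
        simp only [← Finset.range_eq_Ico] at swap
        rw [← swap]
    _ = (x - y) * ∑ j ∈ range M,
          (∑ k ∈ Finset.Ico (j + 1) M, e k * y ^ (k - 1 - j)) * x ^ j := by
        refine congrArg _ (Finset.sum_congr rfl fun j _ => ?_)
        rw [Finset.sum_mul]

end Strip

section Main
variable {K : Type*} [Field K] [TopologicalSpace K] [IsTopologicalRing K]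

/-- the gt-henselian property at a fixed `n` -/
private def GtAt (K : Type*) [Field K] [TopologicalSpace K] (n : ℕ) : Prop :=
  ∀ P ∈ 𝓝 (-1 : K), ∃ O ∈ 𝓝 (0 : K), ∀ a : ℕ → K, (∀ i < n, a i ∈ O) →
    ∃ x ∈ P, x ^ (n + 1) + x ^ n + ∑ i ∈ Finset.range n, a i * x ^ i = 0

/-- the gt-henselian property at a fixed `n`, with second coefficient near 1 -/
private def ClaimAt (K : Type*) [Field K] [TopologicalSpace K] (n : ℕ) : Prop :=
  ∀ P ∈ 𝓝 (-1 : K), ∃ O ∈ 𝓝 (0 : K), ∃ V ∈ 𝓝 (1 : K), ∀ b ∈ V, ∀ a : ℕ → K,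
    (∀ i < n, a i ∈ O) →
    ∃ x ∈ P, x ^ (n + 1) + b * x ^ n + ∑ i ∈ Finset.range n, a i * x ^ i = 0

private lemma claimZero : ClaimAt K 0 := by
  intro P hP
  have hnegt : Tendsto (fun b : K => -b) (𝓝 1) (𝓝 (-1)) := by
    simpa using continuous_neg.tendsto (1 : K)
  refine ⟨Set.univ, univ_mem, (fun b : K => -b) ⁻¹' P, hnegt hP, ?_⟩
  intro b hb a _
  refine ⟨-b, hb, ?_⟩
  simp

private lemma normalize [ContinuousInv₀ K] [T1Space K] {n : ℕ}
    (hgt : GtAt K n) : ClaimAt K n := by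
  intro P hP
  obtain ⟨V₁, hV₁, P', hP', hmul⟩ := prodNhds (f := fun v p => v * p)
    (continuous_mul.continuousAt) (one_mul (-1 : K)) hP
  obtain ⟨O', hO', hroot⟩ := hgt P' hP'
  obtain ⟨O, hO, Vt, hVt, hOV⟩ := mulPowOne (n + 1) hO'
  have h1 : ContinuousAt (fun b : K => b⁻¹) 1 := continuousAt_inv₀ one_ne_zero
  have hinv : (fun b : K => b⁻¹) ⁻¹' Vt ∈ 𝓝 (1 : K) := h1 (by simpa using hVt)
  have hne : {(0 : K)}ᶜ ∈ 𝓝 (1 : K) := isOpen_compl_singleton.mem_nhds (by simp)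
  refine ⟨O, hO, V₁ ∩ ((fun b : K => b⁻¹) ⁻¹' Vt) ∩ {(0 : K)}ᶜ,
    inter_mem (inter_mem hV₁ hinv) hne, ?_⟩
  intro b hb a ha
  have hbne : b ≠ 0 := hb.2
  set c : ℕ → K := fun i => a i * b⁻¹ ^ (n + 1 - i) with hc
  obtain ⟨y, hyP', hy⟩ := hroot c (fun i hi => hOV _ _ _ (by omega) (ha i hi) hb.1.2)
  refine ⟨b * y, hmul b hb.1.1 y hyP', ?_⟩
  have key : (b * y) ^ (n + 1) + b * (b * y) ^ n + ∑ i ∈ range n, a i * (b * y) ^ i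
      = b ^ (n + 1) * (y ^ (n + 1) + y ^ n + ∑ i ∈ range n, c i * y ^ i) := by
    rw [mul_add, mul_add, Finset.mul_sum]
    congr 1
    · congr 1
      · rw [mul_pow]
      · rw [mul_pow, pow_succ]; ring
    · refine Finset.sum_congr rfl fun i hi => ?_
      have hi' : i < n := Finset.mem_range.mp hi
      have hsplit : b ^ (n + 1) = b ^ (n + 1 - i) * b ^ i := by
        rw [← pow_add]; congr 1; omega
      have hcan : b ^ (n + 1 - i) * b⁻¹ ^ (n + 1 - i) = 1 := by
        rw [← mul_pow, mul_inv_cancel₀ hbne, one_pow]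
      calc a i * (b * y) ^ i
          = (b ^ (n + 1 - i) * b⁻¹ ^ (n + 1 - i)) * (a i * (b ^ i * y ^ i)) := by
            rw [hcan, one_mul, mul_pow]
        _ = b ^ (n + 1) * (c i * y ^ i) := by
            simp only [hc]; rw [hsplit]; ring
  rw [key, hy, mul_zero]


/-- The key induction step: from the claim at level `n`, together with t-henselianity,
deduce the gt-henselian property at level `n + 1` (degree `n + 2` polynomials). -/
private lemma gtStep [T1Space K] (hT : THenselian K) (n : ℕ) (hcl : ClaimAt K n) :
    GtAt K (n + 1) := by
  intro P hP
  -- (1) landing set near -1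
  have h1 : Tendsto (fun t : K => -1 + t) (𝓝 0) (𝓝 (-1)) := by
    simpa using (continuous_add_left (-1 : K)).tendsto (0 : K)
  have hS1 : (fun t : K => -1 + t) ⁻¹' P ∈ 𝓝 (0 : K) := h1 hP
  -- (2) claim data at level n
  obtain ⟨O_cl, hO_cl, V₁, hV₁, hclP⟩ := hcl P hP
  -- (3) 1 + · lands in V₁
  have h2 : Tendsto (fun t : K => 1 + t) (𝓝 0) (𝓝 (1 : K)) := by
    simpa using (continuous_add_left (1 : K)).tendsto (0 : K)
  have hSb : (fun t : K => 1 + t) ⁻¹' V₁ ∈ 𝓝 (0 : K) := h2 hV₁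
  -- (4,5) smallness for the coefficients of the quotient polynomial
  obtain ⟨O₄, hO₄, hadd₄⟩ := addSmall (n + 2) hO_cl
  obtain ⟨O_e, hO_e, Z_y, hZ_y, hEP⟩ := eMulPowSmall (n + 1) hO₄
  -- (6) small-root region
  have hSy : (((fun t : K => 1 + t) ⁻¹' V₁) ∩ Z_y) ∈ 𝓝 (0 : K) := inter_mem hSb hZ_y
  -- (7) split
  obtain ⟨W_sp, hW_sp, hsplit⟩ := VpowSplit hT.1 (n + 1) hSy hS1
  -- (8) negation
  have hneg : Tendsto (fun t : K => -t) (𝓝 0) (𝓝 (0 : K)) := by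
    simpa using continuous_neg.tendsto (0 : K)
  have hWn : (fun t : K => -t) ⁻¹' W_sp ∈ 𝓝 (0 : K) := hneg hW_sp
  -- (9) the bound region Z: roots are inverse-outside Z
  have hTne : (fun t : K => 1 + t) ⁻¹' {(0 : K)}ᶜ ∈ 𝓝 (0 : K) :=
    h2 (isOpen_compl_singleton.mem_nhds one_ne_zero)
  obtain ⟨A, hA, B, hB, hAB⟩ := prodNhds (f := fun u v : K => u + v)
    (continuous_add.continuousAt) (add_zero 0) hTne
  obtain ⟨O₅, hO₅, hadd₅⟩ := addSmall (n + 1) hB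
  obtain ⟨O_e2, hO_e2, Z₂, hZ₂, hEP₂⟩ := eMulPowSmall (n + 2) hO₅
  have hZ : (A ∩ Z₂) ∈ 𝓝 (0 : K) := inter_mem hA hZ₂
  -- (10) sums of coefficients times powers of bounded roots are small
  obtain ⟨O₆, hO₆, hadd₆⟩ := addSmall (n + 1) hWn
  obtain ⟨O_bd, hO_bd, hbd⟩ := mulPowBounded hT.1 hZ (n + 1) hO₆
  -- (11) t-henselian root existence at degree n+2
  obtain ⟨U_TH, hU_TH, hTHr⟩ := hT.2 (n + 2) (by omega)
  refine ⟨U_TH ∩ O_e ∩ O_e2 ∩ O_bd,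
    inter_mem (inter_mem (inter_mem hU_TH hO_e) hO_e2) hO_bd, ?_⟩
  intro c hc
  obtain ⟨y, hy⟩ := hTHr c (fun i hi => (hc i (by omega)).1.1.1)
  rw [show n + 2 - 1 = n + 1 by omega] at hy
  -- hy : y ^ (n+2) + y ^ (n+1) + ∑ i ∈ range (n+1), c i * y ^ i = 0
  -- Step A : the root is multiplicatively bounded
  have hyB : y = 0 ∨ y⁻¹ ∉ (A ∩ Z₂) := by
    rcases eq_or_ne y 0 with rfl | hy0
    · exact Or.inl rfl
    · refine Or.inr fun hyZ => ?_
      have hzy : y⁻¹ * y = 1 := inv_mul_cancel₀ hy0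
      have hsum : ∑ i ∈ Finset.range (n + 1), c i * y⁻¹ ^ (n + 2 - i) ∈ B :=
        hadd₅ (n + 1) le_rfl _ (fun i hi =>
          hEP₂ _ _ _ (by omega) (Or.inl (hc i hi).1.2) hyZ.2)
      have hF : (1 : K) + (y⁻¹ + ∑ i ∈ Finset.range (n + 1), c i * y⁻¹ ^ (n + 2 - i))
          ≠ 0 := hAB _ hyZ.1 _ hsum
      apply hF
      have hmain : y ^ (n + 2) *
            ((1 : K) + (y⁻¹ + ∑ i ∈ Finset.range (n + 1), c i * y⁻¹ ^ (n + 2 - i)))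
          = y ^ (n + 2) + y ^ (n + 1) + ∑ i ∈ Finset.range (n + 1), c i * y ^ i := by
        rw [mul_add, mul_add, Finset.mul_sum]
        have hterm : ∀ i ∈ Finset.range (n + 1),
            y ^ (n + 2) * (c i * y⁻¹ ^ (n + 2 - i)) = c i * y ^ i := by
          intro i hi
          have hi' : i < n + 1 := Finset.mem_range.mp hi
          have hsp2 : y ^ (n + 2) = y ^ i * y ^ (n + 2 - i) := by
            rw [← pow_add]; congr 1; omega
          have hcan : y ^ (n + 2 - i) * y⁻¹ ^ (n + 2 - i) = 1 := by
            rw [← mul_pow, mul_inv_cancel₀ hy0, one_pow]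
          calc y ^ (n + 2) * (c i * y⁻¹ ^ (n + 2 - i))
              = (y ^ (n + 2 - i) * y⁻¹ ^ (n + 2 - i)) * (c i * y ^ i) := by
                rw [hsp2]; ring
            _ = c i * y ^ i := by rw [hcan, one_mul]
        rw [Finset.sum_congr rfl hterm]
        have hinv1 : y ^ (n + 2) * y⁻¹ = y ^ (n + 1) := by
          rw [pow_succ, mul_assoc, mul_inv_cancel₀ hy0, mul_one]
        rw [hinv1]; ring
      have h0 : y ^ (n + 2) *
          ((1 : K) + (y⁻¹ + ∑ i ∈ Finset.range (n + 1), c i * y⁻¹ ^ (n + 2 - i))) = 0 := by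
        rw [hmain, hy]
      exact (mul_eq_zero.mp h0).resolve_left (pow_ne_zero _ hy0)
  -- Step B : split into a root near -1 or a root near 0
  have hsmem : ∑ i ∈ Finset.range (n + 1), c i * y ^ i ∈ (fun t : K => -t) ⁻¹' W_sp :=
    hadd₆ (n + 1) le_rfl _ (fun i hi => hbd _ _ i (by omega) (hc i hi).2 hyB)
  have hsp : y ^ (n + 1) * (y + 1) ∈ W_sp := by
    have heq : y ^ (n + 1) * (y + 1) = -(∑ i ∈ Finset.range (n + 1), c i * y ^ i) := by
      linear_combination hy
    rw [heq]; exact hsmem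
  rcases hsplit _ _ hsp with hySy | hyP
  swap
  · -- the root y itself is near -1
    refine ⟨y, ?_, ?_⟩
    · have : -1 + (y + 1) = y := by ring
      have := hyP
      rw [Set.mem_preimage] at this
      rwa [show (-1 : K) + (y + 1) = y by ring] at this
    · rw [show n + 1 + 1 = n + 2 by omega]
      exact hy
  · -- the root y is near 0: strip it off and use the claim at level n
    have hyV : 1 + y ∈ V₁ := hySy.1
    have hyZy : y ∈ Z_y := hySy.2
    set e : ℕ → K := fun k => if k < n + 1 then c k else 1 with he
    have hqe : ∀ t : K, ∑ k ∈ Finset.range (n + 3), e k * t ^ k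
        = t ^ (n + 2) + t ^ (n + 1) + ∑ i ∈ Finset.range (n + 1), c i * t ^ i := by
      intro t
      rw [Finset.sum_range_succ, Finset.sum_range_succ]
      have e1 : e (n + 2) = 1 := if_neg (by omega)
      have e2 : e (n + 1) = 1 := if_neg (by omega)
      rw [e1, e2, one_mul, one_mul]
      have hcongr : ∑ k ∈ Finset.range (n + 1), e k * t ^ k
          = ∑ i ∈ Finset.range (n + 1), c i * t ^ i :=
        Finset.sum_congr rfl fun k hk => by
          rw [he]; simp only []; rw [if_pos (Finset.mem_range.mp hk)]
      rw [hcongr]; ring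
    have hy0 : ∑ k ∈ Finset.range (n + 3), e k * y ^ k = 0 := by rw [hqe]; exact hy
    -- the coefficients of the quotient polynomial
    have hdmem : ∀ j < n,
        (∑ k ∈ Finset.Ico (j + 1) (n + 3), e k * y ^ (k - 1 - j)) ∈ O_cl := by
      intro j hj
      rw [Finset.sum_Ico_eq_sum_range]
      rw [show n + 3 - (j + 1) = n + 2 - j by omega]
      refine hadd₄ (n + 2 - j) (by omega) _ (fun t ht => ?_)
      rw [show j + 1 + t - 1 - j = t by omega]
      by_cases hk : j + 1 + t < n + 1
      · have he2 : e (j + 1 + t) = c (j + 1 + t) := if_pos hk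
        rw [he2]
        exact hEP _ _ _ (by omega) (Or.inl (hc (j + 1 + t) hk).1.1.2) hyZy
      · have he1 : e (j + 1 + t) = 1 := if_neg hk
        exact hEP _ _ _ (by omega) (Or.inr ⟨he1, by omega⟩) hyZy
    obtain ⟨x, hxP, hxr⟩ := hclP (1 + y) hyV
      (fun j => ∑ k ∈ Finset.Ico (j + 1) (n + 3), e k * y ^ (k - 1 - j)) hdmem
    refine ⟨x, hxP, ?_⟩
    -- the three top coefficients of the quotient polynomial
    have hd2 : (∑ k ∈ Finset.Ico (n + 2 + 1) (n + 3), e k * y ^ (k - 1 - (n + 2))) = 0 := by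
      rw [show n + 2 + 1 = n + 3 by omega, Finset.Ico_self, Finset.sum_empty]
    have hd1 : (∑ k ∈ Finset.Ico (n + 1 + 1) (n + 3), e k * y ^ (k - 1 - (n + 1))) = 1 := by
      rw [show n + 1 + 1 = n + 2 by omega]
      rw [Finset.sum_Ico_eq_sum_range, show n + 3 - (n + 2) = 1 by omega,
        Finset.sum_range_one]
      rw [show n + 2 + 0 = n + 2 by omega, show n + 2 - 1 - (n + 1) = 0 by omega]
      rw [show e (n + 2) = 1 from if_neg (by omega), pow_zero, one_mul]
    have hdn : (∑ k ∈ Finset.Ico (n + 1) (n + 3), e k * y ^ (k - 1 - n)) = 1 + y := by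
      rw [Finset.sum_Ico_eq_sum_range, show n + 3 - (n + 1) = 2 by omega,
        Finset.sum_range_succ, Finset.sum_range_one]
      rw [show n + 1 + 0 = n + 1 by omega, show n + 1 + 1 = n + 2 by omega]
      rw [show n + 1 - 1 - n = 0 by omega, show n + 2 - 1 - n = 1 by omega]
      rw [show e (n + 1) = 1 from if_neg (by omega),
        show e (n + 2) = 1 from if_neg (by omega)]
      rw [pow_zero, pow_one, one_mul, one_mul]
    have hrx : ∑ j ∈ Finset.range (n + 3),
        (∑ k ∈ Finset.Ico (j + 1) (n + 3), e k * y ^ (k - 1 - j)) * x ^ j = 0 := by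
      rw [Finset.sum_range_succ, Finset.sum_range_succ, Finset.sum_range_succ]
      rw [hd2, hd1, hdn]
      linear_combination hxr
    have hstrip := stripId (n + 3) e x y hy0
    rw [show n + 1 + 1 = n + 2 by omega]
    calc x ^ (n + 2) + x ^ (n + 1) + ∑ i ∈ Finset.range (n + 1), c i * x ^ i
        = ∑ k ∈ Finset.range (n + 3), e k * x ^ k := (hqe x).symm
      _ = (x - y) * ∑ j ∈ Finset.range (n + 3),
            (∑ k ∈ Finset.Ico (j + 1) (n + 3), e k * y ^ (k - 1 - j)) * x ^ j := hstrip
      _ = 0 := by rw [hrx, mul_zero]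

end Main

end Statement11Aux

/-- A field topology (Hausdorff, non-discrete, with continuous field
operations) is t-henselian if and only if it is gt-henselian and a V-topology. -/
theorem statement11 {K : Type*} [Field K] [TopologicalSpace K]
    [IsTopologicalRing K] [ContinuousInv₀ K] [T2Space K]
    (hnd : ¬ DiscreteTopology K) :
    THenselian K ↔ GtHenselian K ∧ VTopology K := by
  constructor
  · intro hT
    refine ⟨?_, hT.1⟩
    have claim : ∀ n : ℕ, Statement11Aux.ClaimAt K n := by
      intro n
      induction n with
      | zero => exact Statement11Aux.claimZero
      | succ m ih => exact Statement11Aux.normalize (Statement11Aux.gtStep hT m ih)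
    intro n hn P hP
    obtain ⟨O, hO, V, hV, h⟩ := claim n P hP
    refine ⟨O, hO, fun a ha => ?_⟩
    obtain ⟨x, hxP, hx⟩ := h 1 (mem_of_mem_nhds hV) a ha
    exact ⟨x, hxP, by rw [one_mul] at hx; exact hx⟩
  · rintro ⟨hgt, hV⟩
    refine ⟨hV, fun n hn => ?_⟩
    obtain ⟨O, hO, h⟩ := hgt (n - 1) (by omega) Set.univ Filter.univ_mem
    refine ⟨O, hO, fun a ha => ?_⟩
    obtain ⟨x, _, hx⟩ := h a ha
    refine ⟨x, ?_⟩
    rwa [show n - 1 + 1 = n by omega] at hx
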